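/- Let m, p be natural numbers, r ≤ m, A : Fin m → Fin p → ℂ, and v ∈ ℂ. Let c ∈ ℂ^m be a point whose first r coordinates c_α (α < r) lie in the slit plane ℂ ∖ (−∞, 0], and let f : ℂ^m → ℂ be differentiable at c in each coordinate with Σ_{J ∈ Fin m} (A J j)·c_J·(∂f/∂c_J)(c) = 0 for every j ∈ Fin p. Define g(x) = (∏_{α < r} x_α^{−v})·f(x) (principal-branch complex powers). Then for every j ∈ Fin p, Σ_{J ∈ Fin m} (A J j)·c_J·(∂g/∂c_J)(c) = −v·(Σ_{α < r} A α j)·g(c). -/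

import Mathlib

open Finset

set_option maxHeartbeats 1000000 in
theorem stmt9 (m p r : ℕ) (hr : r ≤ m) (A : Fin m → Fin p → ℂ) (v : ℂ)
    (c : Fin m → ℂ) (hc : ∀ α : Fin m, α.val < r → c α ∈ Complex.slitPlane)
    (f : (Fin m → ℂ) → ℂ)
    (hdiff : ∀ J : Fin m, LineDifferentiableAt ℂ f c (Pi.single J 1))
    (hEuler : ∀ j : Fin p,
      ∑ J : Fin m, A J j * c J * lineDeriv ℂ f c (Pi.single J 1) = 0) :
    ∀ j : Fin p,
      ∑ J : Fin m, A J j * c J *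
          lineDeriv ℂ
            (fun x => (∏ α ∈ Finset.univ.filter (fun α : Fin m => α.val < r), x α ^ (-v)) * f x)
            c (Pi.single J 1) =
        -v * (∑ α ∈ Finset.univ.filter (fun α : Fin m => α.val < r), A α j) *
          ((∏ α ∈ Finset.univ.filter (fun α : Fin m => α.val < r), c α ^ (-v)) * f c) := by
  set S := Finset.univ.filter (fun α : Fin m => α.val < r) with hS
  set P := ∏ α ∈ S, c α ^ (-v) with hP
  have key : ∀ J : Fin m, lineDeriv ℂ
      (fun x => (∏ α ∈ S, x α ^ (-v)) * f x) c (Pi.single J 1)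
      = (if J.val < r then -v * (c J)⁻¹ else 0) * P * f c
        + P * lineDeriv ℂ f c (Pi.single J 1) := by
    intro J
    have hf' : HasDerivAt (fun t : ℂ => f (c + t • (Pi.single J 1 : Fin m → ℂ)))
        (lineDeriv ℂ f c (Pi.single J 1)) 0 := (hdiff J).hasLineDerivAt
    by_cases hJ : J.val < r
    · have hJS : J ∈ S := by simp [hS, hJ]
      have hcJ : c J ∈ Complex.slitPlane := hc J hJ
      have hcJ0 : c J ≠ 0 := Complex.slitPlane_ne_zero hcJ
      set Q := ∏ α ∈ S.erase J, c α ^ (-v) with hQ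
      have hfun : ∀ t : ℂ, (∏ α ∈ S, (c + t • (Pi.single J 1 : Fin m → ℂ)) α ^ (-v))
          = (c J + t) ^ (-v) * Q := by
        intro t
        rw [← Finset.mul_prod_erase S _ hJS]
        congr 1
        · simp
        · apply Finset.prod_congr rfl
          intro α hα
          have : α ≠ J := Finset.ne_of_mem_erase hα
          simp [Pi.single_apply, this]
      have hbase : HasDerivAt (fun t : ℂ => (c J + t) ^ (-v))
          (-v * (c J + 0) ^ (-v - 1) * 1) 0 :=
        HasDerivAt.cpow_const ((hasDerivAt_id (0:ℂ)).const_add (c J))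
          (by simpa using hcJ)
      have hprod : HasLineDerivAt ℂ (fun x => (∏ α ∈ S, x α ^ (-v)) * f x)
          ((-v * (c J + 0) ^ (-v - 1) * 1 * Q) * f (c + (0:ℂ) • (Pi.single J 1 : Fin m → ℂ))
            + ((c J + 0) ^ (-v) * Q) * lineDeriv ℂ f c (Pi.single J 1)) c (Pi.single J 1) := by
        show HasDerivAt (fun t : ℂ =>
            (∏ α ∈ S, (c + t • (Pi.single J 1 : Fin m → ℂ)) α ^ (-v)) * f (c + t • (Pi.single J 1 : Fin m → ℂ))) _ 0
        have h2 := (hbase.mul_const Q).mul hf'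
        refine h2.congr_of_eventuallyEq ?_
        filter_upwards with t
        rw [hfun t]; rfl
      have := hprod.lineDeriv
      rw [this, if_pos hJ]
      have hc0 : (c + (0:ℂ) • (Pi.single J 1 : Fin m → ℂ)) = c := by simp
      rw [hc0]
      have hPQ : P = c J ^ (-v) * Q :=
        (Finset.mul_prod_erase S (fun α => c α ^ (-v)) hJS).symm
      have hpow : (c J) ^ (-v - 1) = c J ^ (-v) * (c J)⁻¹ := by
        rw [Complex.cpow_sub _ _ hcJ0, Complex.cpow_one, div_eq_mul_inv]
      rw [add_zero, hpow, hPQ]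
      ring
    · have hfun : ∀ t : ℂ, (∏ α ∈ S, (c + t • (Pi.single J 1 : Fin m → ℂ)) α ^ (-v)) = P := by
        intro t
        rw [hP]
        apply Finset.prod_congr rfl
        intro α hα
        have : α ≠ J := by
          intro h; subst h
          exact hJ (by simpa [hS] using hα)
        simp [Pi.single_apply, this]
      have hprod : HasLineDerivAt ℂ (fun x => (∏ α ∈ S, x α ^ (-v)) * f x)
          (P * lineDeriv ℂ f c (Pi.single J 1)) c (Pi.single J 1) := by
        show HasDerivAt (fun t : ℂ =>
            (∏ α ∈ S, (c + t • (Pi.single J 1 : Fin m → ℂ)) α ^ (-v)) * f (c + t • (Pi.single J 1 : Fin m → ℂ))) _ 0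
        have h2 := hf'.const_mul P
        refine h2.congr_of_eventuallyEq ?_
        filter_upwards with t
        rw [hfun t]
      rw [hprod.lineDeriv, if_neg hJ]
      ring
  intro j
  simp only [key]
  have split : ∑ J : Fin m, A J j * c J *
      ((if J.val < r then -v * (c J)⁻¹ else 0) * P * f c + P * lineDeriv ℂ f c (Pi.single J 1))
      = (∑ J : Fin m, A J j * c J * ((if J.val < r then -v * (c J)⁻¹ else 0) * P * f c))
        + P * ∑ J : Fin m, A J j * c J * lineDeriv ℂ f c (Pi.single J 1) := by
    rw [Finset.mul_sum, ← Finset.sum_add_distrib]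
    apply Finset.sum_congr rfl
    intro J _
    ring
  rw [split, hEuler j, mul_zero, add_zero, mul_assoc, Finset.sum_mul, Finset.mul_sum,
    Finset.sum_filter]
  apply Finset.sum_congr rfl
  intro J _
  by_cases hJ : J.val < r
  · rw [if_pos hJ, if_pos hJ]
    have hcJ0 : c J ≠ 0 := Complex.slitPlane_ne_zero (hc J hJ)
    field_simp
  · rw [if_neg hJ, if_neg hJ]
    ring
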